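/- arXiv:2511.16328 — 2 statements merged into one kernel-verified Lean document; each statement's English description precedes it below -/
import Mathlib

section
/- Let ρ be a finite nonnegative measure supported in [0, E₀] with ρ((0,E₀]) > 0, and define ℰ_n = ∫₀^{E₀} (1 - E/E₀)^n dρ(E). If ρ has density equal to c(E - Δ)^r on (Δ, E₀] near Δ (with 0 ≤ Δ < E₀, r > -1, c > 0) and vanishes on [0, Δ), then ℱ_n := ℰ_{n-1}/ℰ_n satisfies ℱ_n → 1/(1 - Δ/E₀) as n → ∞. -/
open MeasureTheory Filter
open scoped ENNReal NNReal

lemma beta_real_closed (r : ℝ) (hr : -1 < r) (n : ℕ) :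
    ∫ s in (0:ℝ)..1, s ^ r * (1 - s) ^ n
      = (Nat.factorial n : ℝ) / ∏ j ∈ Finset.range (n + 1), (r + 1 + j) := by
  have hu : 0 < Complex.re ((r : ℂ) + 1) := by
    simp only [Complex.add_re, Complex.ofReal_re, Complex.one_re]; linarith
  have h1 : Complex.betaIntegral ((r : ℂ) + 1) ((n : ℂ) + 1)
      = ((∫ s in (0:ℝ)..1, s ^ r * (1 - s) ^ n : ℝ) : ℂ) := by
    rw [Complex.betaIntegral, ← intervalIntegral.integral_ofReal]
    apply intervalIntegral.integral_congr
    intro x hx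
    rw [Set.uIcc_of_le zero_le_one] at hx
    have hx0 : (0:ℝ) ≤ x := hx.1
    simp only [add_sub_cancel_right, ← Complex.ofReal_cpow hx0, Complex.cpow_natCast]
    push_cast
    ring
  have h2 := Complex.betaIntegral_eval_nat_add_one_right hu n
  rw [h1] at h2
  have h3 : (((Nat.factorial n : ℝ) / ∏ j ∈ Finset.range (n + 1), (r + 1 + j) : ℝ) : ℂ)
      = (Nat.factorial n : ℂ) / ∏ j ∈ Finset.range (n + 1), ((r : ℂ) + 1 + j) := by
    push_cast
    ring
  rw [← h3] at h2
  exact_mod_cast h2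

/-- For a density of states `ρ` with density `c(E-Δ)^r` on
`(Δ, E₀]` (vanishing below `Δ`), the moment ratio
`ℱ_n = ℰ_{n-1}/ℰ_n` with `ℰ_n = ∫ (1-E/E₀)^n dρ` converges to `1/(1-Δ/E₀)`. -/
theorem stmt_6 (E₀ Δ c r : ℝ) (hE₀ : 0 < E₀) (hΔ0 : 0 ≤ Δ) (hΔ : Δ < E₀)
    (hr : -1 < r) (hc : 0 < c)
    (ρ : Measure ℝ)
    (hρ : ρ = (volume.restrict (Set.Ioc Δ E₀)).withDensity
      (fun E => ENNReal.ofReal (c * (E - Δ) ^ r))) :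
    Tendsto
      (fun n : ℕ => (∫ E, (1 - E / E₀) ^ (n - 1) ∂ρ) / (∫ E, (1 - E / E₀) ^ n ∂ρ))
      atTop (nhds (1 / (1 - Δ / E₀))) := by
  set L : ℝ := E₀ - Δ with hLdef
  have hL : 0 < L := by simp only [hLdef]; linarith
  set a : ℝ := 1 - Δ / E₀ with hadef
  have ha : 0 < a := by
    have : Δ / E₀ < 1 := (div_lt_one hE₀).2 hΔ
    simp only [hadef]; linarith
  have haL : a * E₀ = L := by
    rw [hadef, hLdef, sub_mul, div_mul_cancel₀ _ hE₀.ne', one_mul]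
  -- positivity of the products
  have hP : ∀ n : ℕ, 0 < ∏ j ∈ Finset.range (n + 1), (r + 1 + (j : ℝ)) := by
    intro n
    apply Finset.prod_pos
    intro j _
    have : (0:ℝ) ≤ j := Nat.cast_nonneg j
    linarith
  -- the key closed form for the moments
  have key : ∀ n : ℕ, (∫ E, (1 - E / E₀) ^ n ∂ρ)
      = (c * L ^ (r + 1)) * a ^ n
        * ((Nat.factorial n : ℝ) / ∏ j ∈ Finset.range (n + 1), (r + 1 + (j : ℝ))) := by
    intro n
    rw [hρ]
    have hmeas : Measurable fun E : ℝ => (c * (E - Δ) ^ r).toNNReal := by fun_prop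
    rw [show (fun E : ℝ => ENNReal.ofReal (c * (E - Δ) ^ r))
        = (fun E : ℝ => ((c * (E - Δ) ^ r).toNNReal : ℝ≥0∞)) from rfl]
    rw [integral_withDensity_eq_integral_smul hmeas]
    have step1 : ∫ E in Set.Ioc Δ E₀, (c * (E - Δ) ^ r).toNNReal • (1 - E / E₀) ^ n
        = ∫ E in Set.Ioc Δ E₀, c * (E - Δ) ^ r * (1 - E / E₀) ^ n := by
      apply setIntegral_congr_fun measurableSet_Ioc
      intro x hx
      have hx0 : (0:ℝ) ≤ c * (x - Δ) ^ r :=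
        mul_nonneg hc.le (Real.rpow_nonneg (by linarith [hx.1]) r)
      simp [NNReal.smul_def, Real.coe_toNNReal _ hx0]
    rw [step1, ← intervalIntegral.integral_of_le hΔ.le]
    have sub := intervalIntegral.integral_comp_mul_add
      (fun x => c * (x - Δ) ^ r * (1 - x / E₀) ^ n) (ne_of_gt hL) Δ (a := 0) (b := 1)
    simp only [mul_zero, zero_add, mul_one] at sub
    have hend : L + Δ = E₀ := by simp [hLdef]
    rw [hend] at sub
    have sub2 : (∫ x in Δ..E₀, c * (x - Δ) ^ r * (1 - x / E₀) ^ n)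
        = L • ∫ s in (0:ℝ)..1, c * (L * s + Δ - Δ) ^ r * (1 - (L * s + Δ) / E₀) ^ n := by
      rw [sub, smul_smul, mul_inv_cancel₀ (ne_of_gt hL), one_smul]
    rw [sub2]
    have congr1 : ∫ s in (0:ℝ)..1, c * (L * s + Δ - Δ) ^ r * (1 - (L * s + Δ) / E₀) ^ n
        = ∫ s in (0:ℝ)..1, (c * L ^ r * a ^ n) * (s ^ r * (1 - s) ^ n) := by
      apply intervalIntegral.integral_congr
      intro s hs
      rw [Set.uIcc_of_le zero_le_one] at hs
      have hs0 : (0:ℝ) ≤ s := hs.1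
      have h1 : L * s + Δ - Δ = L * s := by ring
      have h2 : (L * s) ^ r = L ^ r * s ^ r := Real.mul_rpow hL.le hs0
      have h3 : 1 - (L * s + Δ) / E₀ = a * (1 - s) := by
        field_simp [hadef, hLdef]
        linear_combination (s - 1) * haL - hLdef
      simp only [h1, h2, h3, mul_pow]
      ring
    rw [congr1, intervalIntegral.integral_const_mul, beta_real_closed r hr n]
    rw [Real.rpow_add hL, Real.rpow_one]
    simp only [smul_eq_mul]
    ring
  have hIpos : ∀ n : ℕ, 0 < (Nat.factorial n : ℝ) / ∏ j ∈ Finset.range (n + 1), (r + 1 + (j : ℝ)) :=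
    fun n => div_pos (by exact_mod_cast Nat.factorial_pos n) (hP n)
  have hK : 0 < c * L ^ (r + 1) := mul_pos hc (Real.rpow_pos_of_pos hL _)
  -- limit of the explicit ratio
  have hg : Tendsto (fun n : ℕ => ((1:ℝ) + (r + 1) / n) * (1 / a)) atTop (nhds (1 / a)) := by
    have h0 : Tendsto (fun n : ℕ => (r + 1) / (n : ℝ)) atTop (nhds 0) :=
      tendsto_const_nhds.div_atTop tendsto_natCast_atTop_atTop
    have h1 : Tendsto (fun n : ℕ => (1:ℝ) + (r + 1) / n) atTop (nhds (1 + 0)) :=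
      tendsto_const_nhds.add h0
    simpa using h1.mul
      (tendsto_const_nhds : Tendsto (fun _ : ℕ => (1:ℝ) / a) atTop (nhds (1 / a)))
  refine hg.congr' ?_
  filter_upwards [eventually_ge_atTop 1] with n hn
  obtain ⟨m, rfl⟩ : ∃ m, n = m + 1 := ⟨n - 1, (Nat.succ_pred_eq_of_pos hn).symm⟩
  have hexp : (m + 1) - 1 = m := rfl
  rw [hexp, key m, key (m + 1)]
  rw [Finset.prod_range_succ (fun j => (r + 1 + (j : ℝ))) (m + 1)]
  have hfac : (Nat.factorial (m + 1) : ℝ) = ((m : ℝ) + 1) * (Nat.factorial m : ℝ) := by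
    rw [Nat.factorial_succ]; push_cast; ring
  rw [hfac, pow_succ]
  have hPm := hP m
  have hfm : (0:ℝ) < (Nat.factorial m : ℝ) := by exact_mod_cast Nat.factorial_pos m
  have hm1 : (0:ℝ) < (m : ℝ) + 1 := by positivity
  have hrm : (0:ℝ) < r + 1 + ((m + 1 : ℕ) : ℝ) := by
    push_cast; nlinarith [Nat.cast_nonneg (α := ℝ) m]
  field_simp
  push_cast
  ring
end

section
/- For the {3,q} lattice layer-counting recursion s(0)=1, s(1)=q, s(2)=q(q-4), s(n+1)=(q-4)s(n)-s(n-1) (n≥2), q ≥ 7, with edge increments b(n+1) = 2s(n+1) + s(n), the boundary-to-bulk ratio s(n)/Σ_{k=0}^{n} s(k) converges to a strictly positive limit 1 - 1/λ, where λ = ((q-4)+√((q-4)²-4))/2. -/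
open Filter

/-- For the `{3,q}` layer-counting recursion (`q ≥ 7`) with edge
increments `b(n+1) = 2s(n+1) + s(n)`, the boundary-to-bulk ratio
`s(n)/Σ_{k=0}^n s(k)` converges to the strictly positive limit `1 - 1/λ`,
where `λ = ((q-4)+√((q-4)²-4))/2`. -/
theorem stmt_13 (q : ℝ) (hq : 7 ≤ q) (s b : ℕ → ℝ)
    (h0 : s 0 = 1) (h1 : s 1 = q) (h2 : s 2 = q * (q - 4))
    (hrec : ∀ n, 2 ≤ n → s (n + 1) = (q - 4) * s n - s (n - 1))
    (hb : ∀ n, b (n + 1) = 2 * s (n + 1) + s n) :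
    Tendsto (fun n => s n / ∑ k ∈ Finset.range (n + 1), s k) atTop
        (nhds (1 - 1 / (((q - 4) + Real.sqrt ((q - 4) ^ 2 - 4)) / 2))) ∧
      0 < 1 - 1 / (((q - 4) + Real.sqrt ((q - 4) ^ 2 - 4)) / 2) := by
  set t := q - 4 with ht
  have ht3 : 3 ≤ t := by simp [ht]; linarith
  set d := Real.sqrt (t ^ 2 - 4) with hdd
  have hd2 : d ^ 2 = t ^ 2 - 4 := Real.sq_sqrt (by nlinarith)
  have hd0 : 0 < d := Real.sqrt_pos.mpr (by nlinarith)
  have hdt : d < t := by nlinarith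
  set L := (t + d) / 2 with hL
  set M := (t - d) / 2 with hM
  have hq0 : 0 < q := by linarith
  have hLM : L * M = 1 := by rw [hL, hM]; nlinarith
  have hL1 : 1 < L := by rw [hL]; linarith
  have hL0 : (0:ℝ) < L := by linarith
  have hM0 : 0 < M := by rw [hM]; linarith
  have hM1 : M < 1 := by nlinarith
  have hLsub : L - M = d := by rw [hL, hM]; ring
  have hLadd : L + M = t := by rw [hL, hM]; ring
  have hdne : d ≠ 0 := ne_of_gt hd0
  have hL1ne : L - 1 ≠ 0 := by intro h; linarith [sub_eq_zero.mp h]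
  have hM1ne : M - 1 ≠ 0 := by intro h; nlinarith [sub_eq_zero.mp h]
  -- closed form
  have key : ∀ n : ℕ, s (n+1) = q * (L^(n+1) - M^(n+1)) / d ∧
      s (n+2) = q * (L^(n+2) - M^(n+2)) / d := by
    intro n
    induction n with
    | zero =>
      constructor
      · rw [h1, pow_one, pow_one, hLsub]; field_simp
      · have e : L^2 - M^2 = t * d := by
          have : L^2 - M^2 = (L + M) * (L - M) := by ring
          rw [this, hLadd, hLsub]
        rw [h2, e]; field_simp
    | succ m ih =>
      refine ⟨ih.2, ?_⟩
      have hr := hrec (m+2) (by omega)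
      have hm1 : (m + 2 : ℕ) - 1 = m + 1 := by omega
      rw [hm1] at hr
      rw [hr, ih.1, ih.2]
      linear_combination (q/d) * (L^(m+1) - M^(m+1)) * hLM -
        (q/d) * (L^(m+2) - M^(m+2)) * hLadd
  have hs : ∀ n : ℕ, 1 ≤ n → s n = q * (L^n - M^n) / d := by
    intro n hn
    cases n with
    | zero => omega
    | succ m => exact (key m).1
  -- sum closed form
  have hsum : ∀ n : ℕ, ∑ k ∈ Finset.range (n+1), s k
      = 1 + (q/d) * ((L^(n+1) - L)/(L-1) - (M^(n+1) - M)/(M-1)) := by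
    intro n
    induction n with
    | zero => simp [h0]
    | succ m ih =>
      rw [Finset.sum_range_succ, ih, (key m).1]
      field_simp
      ring
  -- rewrite ratio
  have hEq : ∀ n : ℕ, 1 ≤ n →
      s n / (∑ k ∈ Finset.range (n+1), s k)
      = (q * (1 - (M^2)^n) / d) /
        (M^n + (q/d) * ((L - L * M^n)/(L-1) - (M * (M^2)^n - M * M^n)/(M-1))) := by
    intro n hn
    have hab : L^n * M^n = 1 := by rw [← mul_pow, hLM, one_pow]
    have hM2 : (M^2)^n = (M^n)^2 := by rw [← pow_mul, mul_comm, pow_mul]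
    have e1 : s n = L^n * (q * (1 - (M^2)^n) / d) := by
      rw [hs n hn, hM2]
      field_simp
      linear_combination (M^n) * hab
    have e2 : (∑ k ∈ Finset.range (n+1), s k)
        = L^n * (M^n + (q/d) * ((L - L * M^n)/(L-1) - (M * (M^2)^n - M * M^n)/(M-1))) := by
      rw [hsum n, hM2]
      field_simp
      linear_combination (q * L * (M-1) + q * M * (M^n - 1) * (L-1) - d * (L-1) * (M-1)) * hab
    rw [e1, e2, mul_div_mul_left _ _ (pow_ne_zero n (ne_of_gt hL0))]
  -- limits
  have hMn : Tendsto (fun n : ℕ => M^n) atTop (nhds 0) :=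
    tendsto_pow_atTop_nhds_zero_of_lt_one (le_of_lt hM0) hM1
  have hM2n : Tendsto (fun n : ℕ => (M^2)^n) atTop (nhds 0) :=
    tendsto_pow_atTop_nhds_zero_of_lt_one (sq_nonneg M) (by nlinarith)
  have hnum : Tendsto (fun n : ℕ => q * (1 - (M^2)^n) / d) atTop (nhds (q * (1 - 0) / d)) :=
    ((tendsto_const_nhds.sub hM2n).const_mul q).div_const d
  have hden : Tendsto
      (fun n : ℕ => M^n + (q/d) * ((L - L * M^n)/(L-1) - (M * (M^2)^n - M * M^n)/(M-1)))
      atTop (nhds (0 + (q/d) * ((L - L * 0)/(L-1) - (M * 0 - M * 0)/(M-1)))) := by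
    exact hMn.add ((((tendsto_const_nhds.sub (hMn.const_mul L)).div_const (L-1)).sub
      (((hM2n.const_mul M).sub (hMn.const_mul M)).div_const (M-1))).const_mul (q/d))
  have hdenval : (0 + (q/d) * ((L - L * 0)/(L-1) - (M * 0 - M * 0)/(M-1))) = q/d * (L/(L-1)) := by
    ring
  have hne : (0 + (q/d) * ((L - L * 0)/(L-1) - (M * 0 - M * 0)/(M-1))) ≠ 0 := by
    rw [hdenval]
    positivity
  have hlim := hnum.div hden hne
  have hval : q * (1 - 0) / d / (0 + (q/d) * ((L - L * 0)/(L-1) - (M * 0 - M * 0)/(M-1)))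
      = 1 - 1/L := by
    rw [hdenval]
    field_simp
    ring
  rw [hval] at hlim
  refine ⟨?_, ?_⟩
  · refine Tendsto.congr' ?_ hlim
    filter_upwards [eventually_ge_atTop 1] with n hn
    exact (hEq n hn).symm
  · have : 1/L < 1 := by rw [div_lt_one hL0]; exact hL1
    linarith
end
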